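/- Let M ≥ 2, δ ∈ (0, 1 - 1/M), α = 1/M + δ, β = 1/M - δ/(M-1). For N ≥ 2 let A_N be the diagonal entry of the N-th power of the M×M matrix with diagonal α and off-diagonal β. Then A_N, viewed as a function of δ, is strictly increasing in δ. -/

import Mathlib

lemma sum_two_ite {M : ℕ} (i j : Fin M) (D O d o : ℝ) :
    ∑ k : Fin M, (if i = k then D else O) * (if k = j then d else o)
      = (M:ℝ)*O*o + (D-O)*o + O*(d-o) + (if i = j then (D-O)*(d-o) else 0) := by
  have hdec : ∀ k : Fin M, (if i = k then D else O) * (if k = j then d else o)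
      = O*o + (if k = i then (D-O)*o else 0) + (if k = j then O*(d-o) else 0)
        + (if k = i then (if i = j then (D-O)*(d-o) else 0) else 0) := by
    intro k
    by_cases h1 : i = k <;> by_cases h2 : k = j <;>
      simp only [h1, h2, if_pos, if_neg, eq_comm] <;> simp_all [eq_comm] <;> ring
  rw [Finset.sum_congr rfl (fun k _ => hdec k)]
  simp [Finset.sum_add_distrib, Finset.sum_ite_eq', Finset.card_univ]
  ring

lemma pow_entry (M : ℕ) (hM : 2 ≤ M) (δ : ℝ) (n : ℕ) (hn : 1 ≤ n) :
    ((Matrix.of fun i j : Fin M =>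
        if i = j then 1/(M:ℝ) + δ else 1/(M:ℝ) - δ/((M:ℝ) - 1)) ^ n)
    = Matrix.of (fun i j : Fin M =>
        if i = j then ((M:ℝ)*δ/((M:ℝ)-1))^n + (1-((M:ℝ)*δ/((M:ℝ)-1))^n)/M
        else (1-((M:ℝ)*δ/((M:ℝ)-1))^n)/M) := by
  have hM2 : (2:ℝ) ≤ (M:ℝ) := by exact_mod_cast hM
  have hM0 : (M:ℝ) ≠ 0 := by linarith
  have hM1 : (M:ℝ) - 1 ≠ 0 := by linarith
  have hM1' : -1 + (M:ℝ) ≠ 0 := by linarith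
  induction n with
  | zero => omega
  | succ n ih =>
    rcases Nat.eq_or_lt_of_le hn with h1 | h1
    · -- n+1 = 1, i.e. n = 0
      have hn0 : n = 0 := by omega
      subst hn0
      ext i j
      simp only [pow_one, Matrix.of_apply]
      by_cases h : i = j <;> simp [h] <;> field_simp <;> ring_nf <;> tauto
    · have hn1 : 1 ≤ n := by omega
      have ih' := ih hn1
      ext i j
      rw [pow_succ, Matrix.mul_apply, ih']
      simp only [Matrix.of_apply]
      rw [sum_two_ite]
      by_cases h : i = j <;> simp only [h, if_pos, if_neg, Matrix.of_apply, if_true, if_false] <;>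
        · have hδ : δ = ((M:ℝ)*δ/((M:ℝ)-1))*((M:ℝ)-1)/(M:ℝ) := by field_simp
          generalize (M:ℝ)*δ/((M:ℝ)-1) = c at hδ ⊢
          subst hδ
          field_simp
          ring

theorem stmt_11 (M N : ℕ) (hM : 2 ≤ M) (hN : 2 ≤ N) :
    StrictMonoOn
      (fun δ : ℝ =>
        ((Matrix.of fun i j : Fin M =>
            if i = j then 1/(M:ℝ) + δ else 1/(M:ℝ) - δ/((M:ℝ) - 1)) ^ N)
          ⟨0, by omega⟩ ⟨0, by omega⟩)
      (Set.Ioo (0:ℝ) (1 - 1/(M:ℝ))) := by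
  have hM2 : (2:ℝ) ≤ (M:ℝ) := by exact_mod_cast hM
  have hM1 : (0:ℝ) < (M:ℝ) - 1 := by linarith
  intro a ha b hb hab
  have hN1 : 1 ≤ N := by omega
  simp only [pow_entry M hM a N hN1, pow_entry M hM b N hN1]
  simp only [Matrix.of_apply, if_pos rfl, if_true]
  set ca : ℝ := (M:ℝ)*a/((M:ℝ)-1)
  set cb : ℝ := (M:ℝ)*b/((M:ℝ)-1)
  have hca : 0 ≤ ca := by
    have := ha.1
    positivity
  have hcc : ca < cb := (div_lt_div_iff_of_pos_right hM1).2 (by nlinarith)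
  have hpow : ca^N < cb^N := pow_lt_pow_left₀ hcc hca (by omega)
  have hu : (0:ℝ) < ((M:ℝ))⁻¹ := by positivity
  have hu1 : ((M:ℝ))⁻¹ < 1 := by
    rw [inv_lt_one_iff₀]; right; linarith
  have hMne : (M:ℝ) ≠ 0 := by linarith
  have expand : ∀ x : ℝ, x + (1-x)/(M:ℝ) = x*(1-(M:ℝ)⁻¹) + (M:ℝ)⁻¹ := by
    intro x; field_simp; ring
  rw [expand, expand]
  have h1u : (0:ℝ) < 1 - (M:ℝ)⁻¹ := by linarith
  nlinarith [mul_pos (sub_pos.2 hpow) h1u]
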